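/- Let f : 2^S → ℝ≥0 be submodular, S_0, S_1,...,S_K ⊆ S, and let 0 ≤ r' ≤ J ≤ K be integers. Then ∑_{r=1}^{r'} f(S_r ∪ S_0) + ∑_{r=r'+1}^{J} f(S_r ∪ S^{(r'+1)}([r]) ∪ S_0) ≥ ∑_{r=1}^{r'} f(S^{(r)}([J]) ∪ S_0) + ∑_{r=r'+1}^{J} f(S^{(r'+1)}([r]) ∪ S_0). -/

import Mathlib

open Finset

/-- `cutOp S U r` is `S^{(r)}(U) = ⋃_{U' ⊆ U, |U'| = r} ⋂_{k ∈ U'} S_k`. -/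
def cutOp {α : Type*} [Fintype α] [DecidableEq α] (S : ℕ → Finset α) (U : Finset ℕ)
    (r : ℕ) : Finset α :=
  (U.powersetCard r).sup fun V => V.inf S

section Aux

variable {α : Type*} [Fintype α] [DecidableEq α]

lemma mem_finset_inf {V : Finset ℕ} {S : ℕ → Finset α} {x : α} :
    x ∈ V.inf S ↔ ∀ k ∈ V, x ∈ S k := by
  induction V using Finset.cons_induction <;> simp [*]

lemma mem_cutOp {S : ℕ → Finset α} {U : Finset ℕ} {r : ℕ} {x : α} :
    x ∈ cutOp S U r ↔ ∃ V, V ⊆ U ∧ V.card = r ∧ ∀ k ∈ V, x ∈ S k := by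
  simp only [cutOp, Finset.mem_sup, Finset.mem_powersetCard, mem_finset_inf]
  tauto

lemma cutOp_anti {S : ℕ → Finset α} {U : Finset ℕ} {r t : ℕ} (h : r ≤ t) :
    cutOp S U t ⊆ cutOp S U r := by
  intro x hx
  rw [mem_cutOp] at hx ⊢
  obtain ⟨V, hVU, hVc, hV⟩ := hx
  obtain ⟨W, hWV, hWc⟩ := Finset.exists_subset_card_eq (show r ≤ V.card by omega)
  exact ⟨W, hWV.trans hVU, hWc, fun k hk => hV k (hWV hk)⟩

lemma cutOp_zero (S : ℕ → Finset α) (U : Finset ℕ) : cutOp S U 0 = Finset.univ := by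
  ext x
  simp only [mem_cutOp, Finset.mem_univ, iff_true, Finset.card_eq_zero]
  exact ⟨∅, Finset.empty_subset U, rfl, by simp⟩

lemma cutOp_empty_of_lt {S : ℕ → Finset α} {U : Finset ℕ} {r : ℕ} (h : U.card < r) :
    cutOp S U r = ∅ := by
  ext x
  simp only [mem_cutOp, Finset.notMem_empty, iff_false]
  rintro ⟨V, hVU, hVc, -⟩
  have := Finset.card_le_card hVU
  omega

lemma cutOp_insert {S : ℕ → Finset α} {U : Finset ℕ} {a : ℕ} (ha : a ∉ U) (s : ℕ) :
    cutOp S (insert a U) (s + 1) = cutOp S U (s + 1) ∪ (cutOp S U s ∩ S a) := by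
  ext x
  simp only [Finset.mem_union, Finset.mem_inter, mem_cutOp]
  constructor
  · rintro ⟨V, hVU, hVc, hV⟩
    by_cases haV : a ∈ V
    · refine Or.inr ⟨⟨V.erase a, ?_, ?_, fun k hk => hV k (Finset.erase_subset _ _ hk)⟩,
        hV a haV⟩
      · intro k hk
        have hk' := hVU (Finset.erase_subset _ _ hk)
        rcases Finset.mem_insert.mp hk' with h | h
        · exact absurd (h ▸ hk) (Finset.notMem_erase a V)
        · exact h
      · simp [Finset.card_erase_of_mem haV, hVc]
    · refine Or.inl ⟨V, fun k hk => ?_, hVc, hV⟩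
      rcases Finset.mem_insert.mp (hVU hk) with h | h
      · exact absurd (h ▸ hk) haV
      · exact h
  · rintro (⟨V, hVU, hVc, hV⟩ | ⟨⟨V, hVU, hVc, hV⟩, hxa⟩)
    · exact ⟨V, hVU.trans (Finset.subset_insert _ _), hVc, hV⟩
    · refine ⟨insert a V, Finset.insert_subset_insert a hVU, ?_, ?_⟩
      · rw [Finset.card_insert_of_notMem (fun h => ha (hVU h)), hVc]
      · intro k hk
        rcases Finset.mem_insert.mp hk with h | h
        · exact h ▸ hxa
        · exact hV k h

lemma Icc_succ (m : ℕ) : Finset.Icc 1 (m + 1) = insert (m + 1) (Finset.Icc 1 m) :=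
  (Finset.insert_Icc_right_eq_Icc_add_one (by omega)).symm

lemma cutOp_Icc_succ (S : ℕ → Finset α) (m s : ℕ) :
    cutOp S (Finset.Icc 1 (m + 1)) (s + 1)
      = cutOp S (Finset.Icc 1 m) (s + 1) ∪ (cutOp S (Finset.Icc 1 m) s ∩ S (m + 1)) := by
  rw [Icc_succ, cutOp_insert (by simp)]

lemma sum_Icc_top (f : ℕ → ℝ) (a m : ℕ) (h : a ≤ m + 1) :
    ∑ r ∈ Finset.Icc a (m + 1), f r = ∑ r ∈ Finset.Icc a m, f r + f (m + 1) := by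
  rw [← Finset.insert_Icc_right_eq_Icc_add_one h, Finset.sum_insert (by simp)]
  ring

lemma cascade (g : Finset α → ℝ)
    (hg : ∀ A B : Finset α, g A + g B ≥ g (A ∪ B) + g (A ∩ B))
    (A : ℕ → Finset α) (B : Finset α) :
    ∀ n : ℕ, (∀ r < n, A (r + 1) ⊆ A r) →
    ∑ r ∈ Finset.Icc 1 n, g (A r) + g (A 0 ∩ B)
      ≥ ∑ r ∈ Finset.Icc 1 n, g (A r ∪ (A (r - 1) ∩ B)) + g (A n ∩ B) := by
  intro n
  induction n with
  | zero => simp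
  | succ n ih =>
    intro hchain
    have h1 := ih (fun r hr => hchain r (by omega))
    have h2 := hg (A (n + 1)) (A n ∩ B)
    have h3 : A (n + 1) ∩ (A n ∩ B) = A (n + 1) ∩ B := by
      rw [← Finset.inter_assoc, Finset.inter_eq_left.mpr (hchain n (by omega))]
    rw [h3] at h2
    rw [Icc_succ, Finset.sum_insert (by simp), Finset.sum_insert (by simp)]
    have : (n + 1 : ℕ) - 1 = n := by omega
    rw [this]
    linarith

lemma mainH (g : Finset α → ℝ)
    (hg : ∀ A B : Finset α, g A + g B ≥ g (A ∪ B) + g (A ∩ B))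
    (S : ℕ → Finset α) (m : ℕ) :
    ∑ r ∈ Finset.Icc 1 m, g (S r) ≥ ∑ r ∈ Finset.Icc 1 m, g (cutOp S (Finset.Icc 1 m) r) := by
  induction m with
  | zero => simp
  | succ m ih =>
    have hc := cascade g hg (cutOp S (Finset.Icc 1 m)) (S (m + 1)) m
      (fun r _ => cutOp_anti (by omega))
    rw [cutOp_zero] at hc
    rw [Finset.univ_inter] at hc
    have hsum : ∑ r ∈ Finset.Icc 1 m,
          g (cutOp S (Finset.Icc 1 m) r ∪ (cutOp S (Finset.Icc 1 m) (r - 1) ∩ S (m + 1)))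
        = ∑ r ∈ Finset.Icc 1 m, g (cutOp S (Finset.Icc 1 (m + 1)) r) := by
      apply Finset.sum_congr rfl
      intro r hr
      rw [Finset.mem_Icc] at hr
      obtain ⟨s, rfl⟩ : ∃ s, r = s + 1 := ⟨r - 1, by omega⟩
      rw [cutOp_Icc_succ]
      norm_num
    rw [hsum] at hc
    have hlast : cutOp S (Finset.Icc 1 m) m ∩ S (m + 1)
        = cutOp S (Finset.Icc 1 (m + 1)) (m + 1) := by
      have he : cutOp S (Finset.Icc 1 m) (m + 1) = ∅ :=
        cutOp_empty_of_lt (by rw [Nat.card_Icc]; omega)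
      rw [cutOp_Icc_succ, he, Finset.empty_union]
    rw [hlast] at hc
    rw [sum_Icc_top _ _ _ (by omega), sum_Icc_top _ _ _ (by omega)]
    linarith

lemma key {S : ℕ → Finset α} {J r' s : ℕ} (hs : s ≤ r') :
    cutOp S (Finset.Icc 1 (J + 1)) (r' + 1) ⊆ cutOp S (Finset.Icc 1 J) s := by
  rw [cutOp_Icc_succ]
  apply Finset.union_subset
  · exact cutOp_anti (by omega)
  · exact (Finset.inter_subset_left).trans (cutOp_anti hs)

end Aux

theorem corollary1_submodular {α : Type*} [Fintype α] [DecidableEq α] (K : ℕ)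
    (f : Finset α → ℝ) (hf0 : ∀ A, 0 ≤ f A)
    (hf : ∀ A B : Finset α, f A + f B ≥ f (A ∪ B) + f (A ∩ B))
    (S : ℕ → Finset α) (S0 : Finset α) (r' J : ℕ) (h1 : r' ≤ J) (h2 : J ≤ K) :
    ∑ r ∈ Finset.Icc 1 r', f (S r ∪ S0)
      + ∑ r ∈ Finset.Icc (r' + 1) J, f (S r ∪ cutOp S (Finset.Icc 1 r) (r' + 1) ∪ S0)
    ≥ ∑ r ∈ Finset.Icc 1 r', f (cutOp S (Finset.Icc 1 J) r ∪ S0)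
      + ∑ r ∈ Finset.Icc (r' + 1) J, f (cutOp S (Finset.Icc 1 r) (r' + 1) ∪ S0) := by
  set g : Finset α → ℝ := fun A => f (A ∪ S0) with hgdef
  have hg : ∀ A B : Finset α, g A + g B ≥ g (A ∪ B) + g (A ∩ B) := by
    intro A B
    have := hf (A ∪ S0) (B ∪ S0)
    have hu : A ∪ S0 ∪ (B ∪ S0) = A ∪ B ∪ S0 := by
      ext x; simp [Finset.mem_union]; tauto
    have hi : (A ∪ S0) ∩ (B ∪ S0) = A ∩ B ∪ S0 := by
      ext x; simp [Finset.mem_union, Finset.mem_inter]; tauto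
    rw [hu, hi] at this
    exact this
  show ∑ r ∈ Finset.Icc 1 r', g (S r)
      + ∑ r ∈ Finset.Icc (r' + 1) J, g (S r ∪ cutOp S (Finset.Icc 1 r) (r' + 1))
    ≥ ∑ r ∈ Finset.Icc 1 r', g (cutOp S (Finset.Icc 1 J) r)
      + ∑ r ∈ Finset.Icc (r' + 1) J, g (cutOp S (Finset.Icc 1 r) (r' + 1))
  clear h2 hf0 hf
  induction J, h1 using Nat.le_induction with
  | base => simpa using mainH g hg S r'
  | succ J hJ ih =>
    set B : Finset α := S (J + 1) ∪ cutOp S (Finset.Icc 1 (J + 1)) (r' + 1) with hB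
    have hc := cascade g hg (cutOp S (Finset.Icc 1 J)) B r'
      (fun r _ => cutOp_anti (by omega))
    rw [cutOp_zero, Finset.univ_inter] at hc
    have hsum : ∑ r ∈ Finset.Icc 1 r',
          g (cutOp S (Finset.Icc 1 J) r ∪ (cutOp S (Finset.Icc 1 J) (r - 1) ∩ B))
        = ∑ r ∈ Finset.Icc 1 r', g (cutOp S (Finset.Icc 1 (J + 1)) r) := by
      apply Finset.sum_congr rfl
      intro r hr
      rw [Finset.mem_Icc] at hr
      obtain ⟨s, rfl⟩ : ∃ s, r = s + 1 := ⟨r - 1, by omega⟩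
      congr 1
      have hred : (s + 1 : ℕ) - 1 = s := by omega
      rw [hred, hB, Finset.inter_union_distrib_left,
        Finset.inter_eq_right.mpr (key (show s ≤ r' by omega)),
        ← Finset.union_assoc, ← cutOp_Icc_succ,
        Finset.union_eq_left.mpr (cutOp_anti (by omega))]
    rw [hsum] at hc
    have hlast : cutOp S (Finset.Icc 1 J) r' ∩ B = cutOp S (Finset.Icc 1 (J + 1)) (r' + 1) := by
      rw [hB, Finset.inter_union_distrib_left,
        Finset.inter_eq_right.mpr (key (le_refl r')),
        Finset.union_eq_right.mpr ?_]
      · rw [cutOp_Icc_succ]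
        exact Finset.subset_union_right
    rw [hlast] at hc
    rw [sum_Icc_top _ _ _ (by omega), sum_Icc_top _ _ _ (by omega)]
    linarith
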